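/- Let 𝒜 be an abelian category with enough projectives. Then the restriction map from natural endomorphisms of the identity functor of 𝒜 to natural endomorphisms of the identity functor of the full subcategory of projective objects of 𝒜 (sending η to the family of its components at projective objects) is bijective. -/

import Mathlib

universe v u

open CategoryTheory Limits

/-- For an abelian category with enough projectives, restriction gives a
bijection between natural endomorphisms of the identity functor and natural endomorphisms of
the identity functor of the full subcategory of projective objects. -/
theorem natEndo_restriction_to_projectives_bijective
    (𝒜 : Type u) [Category.{v} 𝒜] [Abelian 𝒜] [EnoughProjectives 𝒜] :
    Function.Bijective
      (fun η : (𝟭 𝒜 ⟶ 𝟭 𝒜) =>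
        ({ app := fun P => ObjectProperty.homMk (η.app P.obj),
           naturality := fun P Q f => ObjectProperty.hom_ext _ (η.naturality f.hom) } :
          𝟭 (ObjectProperty.FullSubcategory fun X : 𝒜 => Projective X) ⟶
            𝟭 (ObjectProperty.FullSubcategory fun X : 𝒜 => Projective X))) := by
  constructor
  · intro η η' h
    ext M
    have hproj : ∀ (X : 𝒜) (hX : Projective X), η.app X = η'.app X := by
      intro X hX
      exact congrArg (fun (θ : 𝟭 (ObjectProperty.FullSubcategory fun X : 𝒜 => Projective X) ⟶ 𝟭 (ObjectProperty.FullSubcategory fun X : 𝒜 => Projective X)) => (θ.app ⟨X, hX⟩).hom) h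
    have h1 := η.naturality (Projective.π M)
    have h2 := η'.naturality (Projective.π M)
    simp only [Functor.id_map] at h1 h2
    have e := hproj (Projective.over M) (Projective.projective_over M)
    rw [← cancel_epi (Projective.π M)]
    simp only [Functor.id_obj]
    rw [h1, h2, e]
  · intro θ
    -- the components of θ, viewed in 𝒜
    let t : ∀ (X : 𝒜), Projective X → (X ⟶ X) := fun X hX => (θ.app ⟨X, hX⟩).hom
    have tnat : ∀ (X Y : 𝒜) (hX : Projective X) (hY : Projective Y) (f : X ⟶ Y),
        f ≫ t Y hY = t X hX ≫ f := fun X Y hX hY f =>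
      congrArg (fun g => g.hom) (θ.naturality (X := ⟨X, hX⟩) (Y := ⟨Y, hY⟩) (ObjectProperty.homMk f))
    let tM : ∀ M : 𝒜, Projective.over M ⟶ Projective.over M :=
      fun M => t (Projective.over M) (Projective.projective_over M)
    have key : ∀ M : 𝒜, kernel.ι (Projective.π M) ≫ (tM M ≫ Projective.π M) = 0 := by
      intro M
      have hnat := tnat (Projective.over (kernel (Projective.π M))) (Projective.over M)
        (Projective.projective_over _) (Projective.projective_over M)
        (Projective.π (kernel (Projective.π M)) ≫ kernel.ι (Projective.π M))
      rw [← cancel_epi (Projective.π (kernel (Projective.π M)))]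
      calc Projective.π (kernel (Projective.π M)) ≫
            kernel.ι (Projective.π M) ≫ tM M ≫ Projective.π M
          = ((Projective.π (kernel (Projective.π M)) ≫ kernel.ι (Projective.π M)) ≫ tM M) ≫
              Projective.π M := by simp
        _ = (t (Projective.over (kernel (Projective.π M))) (Projective.projective_over _) ≫
              (Projective.π (kernel (Projective.π M)) ≫ kernel.ι (Projective.π M))) ≫
              Projective.π M := by rw [hnat]
        _ = t (Projective.over (kernel (Projective.π M))) (Projective.projective_over _) ≫
              Projective.π (kernel (Projective.π M)) ≫
              (kernel.ι (Projective.π M) ≫ Projective.π M) := by simp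
        _ = 0 := by rw [kernel.condition]; simp
        _ = Projective.π (kernel (Projective.π M)) ≫ 0 := by simp
    have comp : ∀ M : 𝒜, Projective.π M ≫
        Abelian.epiDesc (Projective.π M) (tM M ≫ Projective.π M) (key M)
        = tM M ≫ Projective.π M := fun M => Abelian.comp_epiDesc _ _ _
    refine ⟨{ app := fun M =>
                Abelian.epiDesc (Projective.π M) (tM M ≫ Projective.π M) (key M)
              naturality := ?_ }, ?_⟩
    · intro M N f
      simp only [Functor.id_obj, Functor.id_map]
      rw [← cancel_epi (Projective.π M)]
      have hgc : Projective.factorThru (Projective.π M ≫ f) (Projective.π N) ≫ Projective.π N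
          = Projective.π M ≫ f := Projective.factorThru_comp _ _
      have hnat := tnat (Projective.over M) (Projective.over N)
        (Projective.projective_over M) (Projective.projective_over N)
        (Projective.factorThru (Projective.π M ≫ f) (Projective.π N))
      calc Projective.π M ≫ f ≫ Abelian.epiDesc (Projective.π N) _ (key N)
          = Projective.factorThru (Projective.π M ≫ f) (Projective.π N) ≫
              Projective.π N ≫ Abelian.epiDesc (Projective.π N) _ (key N) := by
            conv_lhs => rw [← Category.assoc, ← hgc, Category.assoc]
        _ = Projective.factorThru (Projective.π M ≫ f) (Projective.π N) ≫
              tM N ≫ Projective.π N := by rw [comp N]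
        _ = (Projective.factorThru (Projective.π M ≫ f) (Projective.π N) ≫ tM N) ≫
              Projective.π N := by simp
        _ = (tM M ≫ Projective.factorThru (Projective.π M ≫ f) (Projective.π N)) ≫
              Projective.π N := by rw [hnat]
        _ = tM M ≫ (Projective.factorThru (Projective.π M ≫ f) (Projective.π N) ≫
              Projective.π N) := by simp
        _ = tM M ≫ Projective.π M ≫ f := by rw [hgc]
        _ = (Projective.π M ≫ Abelian.epiDesc (Projective.π M) _ (key M)) ≫ f := by
            rw [comp M]; simp
        _ = Projective.π M ≫ Abelian.epiDesc (Projective.π M) _ (key M) ≫ f := by simp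
    · ext P
      show Abelian.epiDesc (Projective.π P.obj) (tM P.obj ≫ Projective.π P.obj) (key P.obj)
        = t P.obj P.property
      have hnat := tnat (Projective.over P.obj) P.obj
        (Projective.projective_over P.obj) P.property (Projective.π P.obj)
      rw [← cancel_epi (Projective.π P.obj), comp P.obj]
      exact hnat.symm
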